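/- Let V, W be 2-dimensional complex vector spaces with bases ξ₁,ξ₂ and ξ̄₁,ξ̄₂, and A^{p,q} = Λ^p V ⊗ Λ^q W. Suppose μ̄ is a bidegree (-1,2) derivation on Λ(V ⊕ W) vanishing on W with μ̄² = 0 such that μ̄: A^{1,0} → A^{0,2} is surjective and μ̄: A^{2,0} → A^{1,2} is injective. Then the μ̄-cohomology dimensions are: h^{0,0}=1, h^{1,0}=1, h^{2,0}=0, h^{0,1}=2, h^{1,1}=4, h^{2,1}=2, h^{0,2}=0, h^{1,2}=1, h^{2,2}=1. -/

import Mathlib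

set_option maxHeartbeats 1000000

/-- `Λ(V ⊕ W)` for `V, W` of dimension 2, modelled as the exterior algebra on four
generators: `ξᵢ = g4 i` for `i < 2` span `V` and `ξ̄ᵢ = g4 (i+2)` span `W`. -/
abbrev Ext4 : Type := ExteriorAlgebra ℂ (Fin 4 → ℂ)

noncomputable def g4 (i : Fin 4) : Ext4 :=
  ExteriorAlgebra.ι ℂ (Pi.single i 1)

/-- The bigraded piece `A^{p,q} = Λ^p V ⊗ Λ^q W`. -/
noncomputable def A4 (p q : ℤ) : Submodule ℂ Ext4 :=
  Submodule.span ℂ {x | ∃ s : Finset (Fin 4),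
    (((s.filter (fun i : Fin 4 => (i : ℕ) < 2)).card : ℤ) = p) ∧
    (((s.filter (fun i : Fin 4 => 2 ≤ (i : ℕ))).card : ℤ) = q) ∧
    x = ((s.sort (· ≤ ·)).map g4).prod}

/-- `μ̄`-cohomology dimensions `h^{p,q} = dim (Ker μ̄ ∩ A^{p,q}) / μ̄(A^{p+1,q-2})`. -/
noncomputable def h4 (mub : Ext4 →ₗ[ℂ] Ext4) (p q : ℤ) : ℕ :=
  Module.finrank ℂ
    (↥(LinearMap.ker mub ⊓ A4 p q) ⧸
      Submodule.comap (LinearMap.ker mub ⊓ A4 p q).subtype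
        ((A4 (p + 1) (q - 2)).map mub))

/-! ### Auxiliary material: monomials, dual functionals, linear independence -/

noncomputable def mono (s : Finset (Fin 4)) : Ext4 := ((s.sort (· ≤ ·)).map g4).prod

lemma mono_eq (t : Finset (Fin 4)) :
    mono t = ExteriorAlgebra.ιMulti ℂ t.card
      (fun i => Pi.single (t.orderEmbOfFin rfl i) (1 : ℂ)) := by
  rw [ExteriorAlgebra.ιMulti_apply, mono]
  congr 1
  apply List.ext_getElem
  · simp [Finset.length_sort]
  · intro n h1 h2
    simp [g4, Finset.orderEmbOfFin_apply]

noncomputable def dmap (s : Finset (Fin 4)) (k : ℕ) : (Fin 4 → ℂ) [⋀^Fin k]→ₗ[ℂ] ℂ :=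
  if h : s.card = k then
    Matrix.detRowAlternating.compLinearMap (LinearMap.funLeft ℂ ℂ (s.orderEmbOfFin h))
  else 0

noncomputable def dualA (s : Finset (Fin 4)) : Ext4 →ₗ[ℂ] ℂ :=
  ExteriorAlgebra.liftAlternating (dmap s)

lemma dualA_mono (s t : Finset (Fin 4)) : dualA s (mono t) = if s = t then 1 else 0 := by
  rw [mono_eq, dualA, ExteriorAlgebra.liftAlternating_apply_ιMulti, dmap]
  by_cases h : s.card = t.card
  · rw [dif_pos h]
    simp only [AlternatingMap.compLinearMap_apply]
    by_cases hst : s = t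
    · subst hst
      rw [if_pos rfl]
      show (Matrix.of fun j i => (Pi.single ((s.orderEmbOfFin rfl) j) (1:ℂ) : Fin 4 → ℂ)
        ((s.orderEmbOfFin h) i)).det = 1
      have he : (Matrix.of fun j i => (Pi.single ((s.orderEmbOfFin rfl) j) (1:ℂ) : Fin 4 → ℂ)
          ((s.orderEmbOfFin h) i)) = (1 : Matrix (Fin s.card) (Fin s.card) ℂ) := by
        ext j i
        simp only [Matrix.of_apply, Pi.single_apply, Matrix.one_apply]
        have hiff : s.orderEmbOfFin h i = s.orderEmbOfFin rfl j ↔ j = i := by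
          rw [show s.orderEmbOfFin h = s.orderEmbOfFin rfl from rfl]
          rw [(s.orderEmbOfFin rfl).injective.eq_iff]
          exact eq_comm
        simp [hiff]
      rw [he, Matrix.det_one]
    · rw [if_neg hst]
      obtain ⟨j0, hj0⟩ : ∃ j : Fin t.card, t.orderEmbOfFin rfl j ∉ s := by
        by_contra hall
        push_neg at hall
        apply hst
        refine (Finset.eq_of_subset_of_card_le ?_ (le_of_eq h)).symm
        intro x hx
        have : x ∈ Set.range (t.orderEmbOfFin rfl) := by
          rw [Finset.range_orderEmbOfFin]; exact hx
        obtain ⟨j, rfl⟩ := this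
        exact hall j
      show Matrix.det _ = _
      apply Matrix.det_eq_zero_of_row_eq_zero j0
      intro i
      simp only [Matrix.of_apply, LinearMap.funLeft_apply, Pi.single_apply]
      rw [if_neg]
      intro hh
      exact hj0 (hh ▸ Finset.orderEmbOfFin_mem s h i)
  · rw [dif_neg h, if_neg (fun hst => h (by rw [hst])), AlternatingMap.zero_apply]

lemma mono_li : LinearIndependent ℂ mono := by
  rw [Fintype.linearIndependent_iff]
  intro g hg t
  have h2 := congrArg (dualA t) hg
  simpa [map_sum, map_smul, dualA_mono, Finset.sum_ite_eq] using h2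

def S4 (p q : ℤ) : Set (Finset (Fin 4)) :=
  {s | (((s.filter (fun i : Fin 4 => (i : ℕ) < 2)).card : ℤ) = p) ∧
    (((s.filter (fun i : Fin 4 => 2 ≤ (i : ℕ))).card : ℤ) = q)}

lemma A4_eq_span (p q : ℤ) : A4 p q = Submodule.span ℂ (mono '' S4 p q) := by
  unfold A4 S4
  congr 1
  ext x
  simp only [Set.mem_setOf_eq, Set.mem_image, mono]
  constructor
  · rintro ⟨s, h1, h2, rfl⟩; exact ⟨s, ⟨h1, h2⟩, rfl⟩
  · rintro ⟨s, ⟨h1, h2⟩, rfl⟩; exact ⟨s, h1, h2, rfl⟩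

lemma A4_bot {p q : ℤ} (h : p < 0 ∨ 2 < p ∨ q < 0 ∨ 2 < q) : A4 p q = ⊥ := by
  rw [A4_eq_span]
  have hS : S4 p q = ∅ := by
    ext s
    simp only [S4, Set.mem_setOf_eq, Set.mem_empty_iff_false, iff_false, not_and]
    intro h1 h2
    have e1 : (s.filter (fun i : Fin 4 => (i : ℕ) < 2)).card ≤ 2 := by
      calc _ ≤ ({0,1} : Finset (Fin 4)).card := Finset.card_le_card (by
              intro i hi; simp only [Finset.mem_filter] at hi
              fin_cases i <;> simp_all)
        _ = 2 := rfl
    have e2 : (s.filter (fun i : Fin 4 => 2 ≤ (i : ℕ))).card ≤ 2 := by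
      calc _ ≤ ({2,3} : Finset (Fin 4)).card := Finset.card_le_card (by
              intro i hi; simp only [Finset.mem_filter] at hi
              fin_cases i <;> simp_all)
        _ = 2 := rfl
    omega
  rw [hS, Set.image_empty, Submodule.span_empty]

lemma A4_eq_range (p q : ℤ) {k : ℕ} (c : Fin k → Finset (Fin 4))
    (hset : S4 p q = Set.range c) :
    A4 p q = Submodule.span ℂ (Set.range (mono ∘ c)) := by
  rw [A4_eq_span, hset, Set.range_comp]

lemma finrank_A4 {p q : ℤ} {k : ℕ} (c : Fin k → Finset (Fin 4))
    (hset : S4 p q = Set.range c) (hc : Function.Injective c) :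
    Module.finrank ℂ (A4 p q) = k := by
  rw [A4_eq_range p q c hset, finrank_span_eq_card (mono_li.comp c hc), Fintype.card_fin]

lemma A4_fd {p q : ℤ} {k : ℕ} (c : Fin k → Finset (Fin 4))
    (hset : S4 p q = Set.range c) : FiniteDimensional ℂ (A4 p q) := by
  rw [A4_eq_range p q c hset]
  exact FiniteDimensional.span_of_finite ℂ (Set.finite_range _)

lemma hS00 : S4 0 0 = Set.range ![(∅ : Finset (Fin 4))] := by
  ext s; simp only [S4, Set.mem_setOf_eq, Set.mem_range]; revert s; decide
lemma hS10 : S4 1 0 = Set.range ![({0} : Finset (Fin 4)),{1}] := by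
  ext s; simp only [S4, Set.mem_setOf_eq, Set.mem_range]; revert s; decide
lemma hS20 : S4 2 0 = Set.range ![({0,1} : Finset (Fin 4))] := by
  ext s; simp only [S4, Set.mem_setOf_eq, Set.mem_range]; revert s; decide
lemma hS01 : S4 0 1 = Set.range ![({2} : Finset (Fin 4)),{3}] := by
  ext s; simp only [S4, Set.mem_setOf_eq, Set.mem_range]; revert s; decide
lemma hS11 : S4 1 1 = Set.range ![({0,2} : Finset (Fin 4)),{0,3},{1,2},{1,3}] := by
  ext s; simp only [S4, Set.mem_setOf_eq, Set.mem_range]; revert s; decide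
lemma hS21 : S4 2 1 = Set.range ![({0,1,2} : Finset (Fin 4)),{0,1,3}] := by
  ext s; simp only [S4, Set.mem_setOf_eq, Set.mem_range]; revert s; decide
lemma hS02 : S4 0 2 = Set.range ![({2,3} : Finset (Fin 4))] := by
  ext s; simp only [S4, Set.mem_setOf_eq, Set.mem_range]; revert s; decide
lemma hS12 : S4 1 2 = Set.range ![({0,2,3} : Finset (Fin 4)),{1,2,3}] := by
  ext s; simp only [S4, Set.mem_setOf_eq, Set.mem_range]; revert s; decide
lemma hS22 : S4 2 2 = Set.range ![({0,1,2,3} : Finset (Fin 4))] := by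
  ext s; simp only [S4, Set.mem_setOf_eq, Set.mem_range]; revert s; decide

lemma fr00 : Module.finrank ℂ (A4 0 0) = 1 := finrank_A4 _ hS00 (by decide)
lemma fr10 : Module.finrank ℂ (A4 1 0) = 2 := finrank_A4 _ hS10 (by decide)
lemma fr20 : Module.finrank ℂ (A4 2 0) = 1 := finrank_A4 _ hS20 (by decide)
lemma fr01 : Module.finrank ℂ (A4 0 1) = 2 := finrank_A4 _ hS01 (by decide)
lemma fr11 : Module.finrank ℂ (A4 1 1) = 4 := finrank_A4 _ hS11 (by decide)
lemma fr21 : Module.finrank ℂ (A4 2 1) = 2 := finrank_A4 _ hS21 (by decide)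
lemma fr02 : Module.finrank ℂ (A4 0 2) = 1 := finrank_A4 _ hS02 (by decide)
lemma fr12 : Module.finrank ℂ (A4 1 2) = 2 := finrank_A4 _ hS12 (by decide)
lemma fr22 : Module.finrank ℂ (A4 2 2) = 1 := finrank_A4 _ hS22 (by decide)

lemma h4_eq_finrank (mub : Ext4 →ₗ[ℂ] Ext4) (p q : ℤ) (hbot : A4 (p + 1) (q - 2) = ⊥) :
    h4 mub p q
      = Module.finrank ℂ (LinearMap.ker mub ⊓ A4 p q : Submodule ℂ Ext4) := by
  unfold h4
  rw [hbot, Submodule.map_bot, Submodule.comap_bot, Submodule.ker_subtype]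
  exact (Submodule.quotEquivOfEqBot _ rfl).finrank_eq

/-! ### The main theorem -/

theorem stmt_17 (mub : Ext4 →ₗ[ℂ] Ext4)
    (hderiv : ∀ p q : ℤ, ∀ x ∈ A4 p q, ∀ y : Ext4,
      mub (x * y) = mub x * y + ((-1 : ℂ) ^ (p + q)) • (x * mub y))
    (hmap : ∀ p q : ℤ, (A4 p q).map mub ≤ A4 (p - 1) (q + 2))
    (hsq : mub ∘ₗ mub = 0)
    (hW2 : mub (g4 2) = 0) (hW3 : mub (g4 3) = 0)
    (hsurj10 : (A4 1 0).map mub = A4 0 2)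
    (hinj20 : ∀ x ∈ A4 2 0, mub x = 0 → x = 0) :
    (h4 mub 0 0 = 1 ∧ h4 mub 1 0 = 1 ∧ h4 mub 2 0 = 0) ∧
    (h4 mub 0 1 = 2 ∧ h4 mub 1 1 = 4 ∧ h4 mub 2 1 = 2) ∧
    (h4 mub 0 2 = 0 ∧ h4 mub 1 2 = 1 ∧ h4 mub 2 2 = 1) := by
  -- the kernel facts for pieces where `mub` vanishes
  have hker : ∀ p q : ℤ, A4 (p - 1) (q + 2) = ⊥ → A4 p q ≤ LinearMap.ker mub := by
    intro p q hb
    have h1 := hmap p q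
    rw [hb, le_bot_iff] at h1
    intro x hx
    have : mub x ∈ ((A4 p q).map mub) := ⟨x, hx, rfl⟩
    rw [h1, Submodule.mem_bot] at this
    exact LinearMap.mem_ker.mpr this
  have k00 : A4 0 0 ≤ LinearMap.ker mub := hker 0 0 (A4_bot (by norm_num))
  have k01 : A4 0 1 ≤ LinearMap.ker mub := hker 0 1 (A4_bot (by norm_num))
  have k02 : A4 0 2 ≤ LinearMap.ker mub := hker 0 2 (A4_bot (by norm_num))
  have k11 : A4 1 1 ≤ LinearMap.ker mub := hker 1 1 (A4_bot (by norm_num))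
  have k12 : A4 1 2 ≤ LinearMap.ker mub := hker 1 2 (A4_bot (by norm_num))
  have k21 : A4 2 1 ≤ LinearMap.ker mub := hker 2 1 (A4_bot (by norm_num))
  have k22 : A4 2 2 ≤ LinearMap.ker mub := hker 2 2 (A4_bot (by norm_num))
  refine ⟨⟨?_, ?_, ?_⟩, ⟨?_, ?_, ?_⟩, ⟨?_, ?_, ?_⟩⟩
  · -- h 0 0 = 1
    rw [h4_eq_finrank mub 0 0 (A4_bot (by norm_num)), inf_eq_right.mpr k00, fr00]
  · -- h 1 0 = 1
    rw [h4_eq_finrank mub 1 0 (A4_bot (by norm_num))]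
    have fd : FiniteDimensional ℂ (A4 1 0) := A4_fd _ hS10
    set f := mub.domRestrict (A4 1 0) with hf
    have hrange : LinearMap.range f = (A4 1 0).map mub := LinearMap.range_domRestrict _ _
    have hrk := LinearMap.finrank_range_add_finrank_ker f
    rw [hrange, hsurj10, fr02, fr10] at hrk
    have hkereq : Module.finrank ℂ (LinearMap.ker f)
        = Module.finrank ℂ (LinearMap.ker mub ⊓ A4 1 0 : Submodule ℂ Ext4) := by
      have e1 := (Submodule.equivMapOfInjective (A4 1 0).subtype
        (Submodule.injective_subtype _) (LinearMap.ker f)).finrank_eq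
      rw [e1]
      have e2 : Submodule.map (A4 1 0).subtype (LinearMap.ker f)
          = LinearMap.ker mub ⊓ A4 1 0 := by
        rw [hf, LinearMap.ker_domRestrict, Submodule.map_comap_subtype]
        exact inf_comm _ _
      rw [e2]
    omega
  · -- h 2 0 = 0
    rw [h4_eq_finrank mub 2 0 (A4_bot (by norm_num))]
    have : LinearMap.ker mub ⊓ A4 2 0 = ⊥ := by
      rw [eq_bot_iff]
      intro x hx
      rw [Submodule.mem_inf] at hx
      rw [Submodule.mem_bot]
      exact hinj20 x hx.2 (LinearMap.mem_ker.mp hx.1)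
    rw [this, finrank_bot]
  · -- h 0 1 = 2
    rw [h4_eq_finrank mub 0 1 (A4_bot (by norm_num)), inf_eq_right.mpr k01, fr01]
  · -- h 1 1 = 4
    rw [h4_eq_finrank mub 1 1 (A4_bot (by norm_num)), inf_eq_right.mpr k11, fr11]
  · -- h 2 1 = 2
    rw [h4_eq_finrank mub 2 1 (A4_bot (by norm_num)), inf_eq_right.mpr k21, fr21]
  · -- h 0 2 = 0
    unfold h4
    have hc : Submodule.comap (LinearMap.ker mub ⊓ A4 0 2).subtype
        ((A4 (0 + 1) (2 - 2)).map mub) = ⊤ := by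
      rw [Submodule.comap_subtype_eq_top]
      have h1 : A4 (0 + 1) (2 - 2) = A4 1 0 := by norm_num
      rw [h1, hsurj10]
      exact inf_le_right
    rw [hc]
    have : Subsingleton (↥(LinearMap.ker mub ⊓ A4 0 2) ⧸
        (⊤ : Submodule ℂ ↥(LinearMap.ker mub ⊓ A4 0 2))) :=
      Submodule.Quotient.subsingleton_iff.mpr rfl
    exact Module.finrank_zero_of_subsingleton
  · -- h 1 2 = 1
    unfold h4
    have h1 : A4 (1 + 1) (2 - 2) = A4 2 0 := by norm_num
    rw [h1]
    have fd12 : FiniteDimensional ℂ (A4 1 2) := A4_fd _ hS12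
    have fd20 : FiniteDimensional ℂ (A4 2 0) := A4_fd _ hS20
    have hIk : (A4 2 0).map mub ≤ LinearMap.ker mub := by
      rintro y ⟨x, hx, rfl⟩
      rw [LinearMap.mem_ker]
      have := LinearMap.ext_iff.mp hsq x
      simpa using this
    have hIA : (A4 2 0).map mub ≤ A4 1 2 := by
      have := hmap 2 0
      have h2 : A4 (2 - 1) (0 + 2) = A4 1 2 := by norm_num
      rwa [h2] at this
    have hIN : (A4 2 0).map mub ≤ LinearMap.ker mub ⊓ A4 1 2 := le_inf hIk hIA
    have fdN : FiniteDimensional ℂ (LinearMap.ker mub ⊓ A4 1 2 : Submodule ℂ Ext4) :=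
      Submodule.finiteDimensional_of_le (inf_le_right)
    have hq := Submodule.finrank_quotient_add_finrank
      (Submodule.comap (LinearMap.ker mub ⊓ A4 1 2).subtype ((A4 2 0).map mub))
    have hcomap : Module.finrank ℂ
        (Submodule.comap (LinearMap.ker mub ⊓ A4 1 2).subtype ((A4 2 0).map mub))
        = Module.finrank ℂ ((A4 2 0).map mub) :=
      (Submodule.comapSubtypeEquivOfLe hIN).finrank_eq
    have hNfr : Module.finrank ℂ (LinearMap.ker mub ⊓ A4 1 2 : Submodule ℂ Ext4) = 2 := by
      rw [inf_eq_right.mpr k12, fr12]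
    have hIfr : Module.finrank ℂ ((A4 2 0).map mub) = 1 := by
      set g := mub.domRestrict (A4 2 0) with hg
      have hrange : LinearMap.range g = (A4 2 0).map mub := LinearMap.range_domRestrict _ _
      have hkg : LinearMap.ker g = ⊥ := by
        rw [eq_bot_iff]
        rintro ⟨x, hx⟩ hxk
        rw [LinearMap.mem_ker] at hxk
        have : x = 0 := hinj20 x hx hxk
        simpa [Submodule.mem_bot, Subtype.ext_iff] using this
      have hrk := LinearMap.finrank_range_add_finrank_ker g
      rw [hrange, hkg, fr20, finrank_bot] at hrk
      omega
    rw [hcomap, hIfr, hNfr] at hq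
    omega
  · -- h 2 2 = 1
    rw [h4_eq_finrank mub 2 2 (A4_bot (by norm_num)), inf_eq_right.mpr k22, fr22]
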